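/- Let K > 0 and let η : (0,∞)² → [0,∞) be a measurable function satisfying η(x,y) ≤ K·(x²+y²)^{−3/2} for all x, y > 0, and let q : (0,∞) → (0,∞) be non-increasing. Then ∫_0^∞ q(u)·(1 + |log q(u)|)·η(u, q(u)) du < ∞. -/

import Mathlib

open MeasureTheory Set

private lemma base_bound (a b : ℝ) (hb : 0 < b) :
    (a ^ 2 + b ^ 2) ^ (-(3 : ℝ) / 2) ≤ 1 / b ^ 3 := by
  have h1 : (b : ℝ) ^ 2 ≤ a ^ 2 + b ^ 2 := by nlinarith [sq_nonneg a]
  have h2 : (a ^ 2 + b ^ 2) ^ (-(3 : ℝ) / 2) ≤ (b ^ 2) ^ (-(3 : ℝ) / 2) :=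
    Real.rpow_le_rpow_of_nonpos (by positivity) h1 (by norm_num)
  have h3 : (b ^ 2 : ℝ) ^ (-(3 : ℝ) / 2) = 1 / b ^ 3 := by
    rw [show (b : ℝ) ^ 2 = b ^ ((2 : ℕ) : ℝ) from (Real.rpow_natCast b 2).symm,
      ← Real.rpow_mul hb.le]
    norm_num
  linarith [h2, h3.le, h3.ge]

private lemma aux1 (c t : ℝ) (hc : 0 < c) (hct : c ≤ t) :
    (1 + |Real.log t|) / t ^ 2 ≤ (1 + |Real.log c|) / c ^ 2 + 1 / c := by
  have ht : 0 < t := hc.trans_le hct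
  have hlt : Real.log t ≤ t := (Real.log_le_sub_one_of_pos ht).trans (by linarith)
  have hlc : Real.log c ≤ Real.log t := Real.log_le_log hc hct
  have habs : |Real.log t| ≤ |Real.log c| + t := by
    rcases abs_cases (Real.log t) with ⟨h, _⟩ | ⟨h, _⟩
    · rw [h]; have := le_abs_self (Real.log c); linarith [abs_nonneg (Real.log c), ht.le]
    · rw [h]; have := neg_le_abs (Real.log c); linarith [ht.le]
  have step1 : (1 + |Real.log t|) / t ^ 2 ≤ (1 + |Real.log c| + t) / t ^ 2 := by
    apply div_le_div_of_nonneg_right (by linarith) (by positivity)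
  have step2 : (1 + |Real.log c| + t) / t ^ 2 = (1 + |Real.log c|) / t ^ 2 + 1 / t := by
    field_simp
  have step3 : (1 + |Real.log c|) / t ^ 2 ≤ (1 + |Real.log c|) / c ^ 2 :=
    div_le_div_of_nonneg_left (by positivity) (by positivity) (by nlinarith)
  have step4 : (1 : ℝ) / t ≤ 1 / c := one_div_le_one_div_of_le hc hct
  linarith

private lemma aux2 (c t : ℝ) (hc : 0 < c) (ht : 0 < t) (htc : t ≤ c) :
    t * (1 + |Real.log t|) ≤ c * (1 + |Real.log c|) + 1 := by
  rcases le_or_gt t 1 with h1 | h1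
  · have hlt : Real.log t ≤ 0 := Real.log_nonpos ht.le h1
    have habs : |Real.log t| = -Real.log t := abs_of_nonpos hlt
    have hinv : Real.log (1 / t) ≤ 1 / t - 1 := Real.log_le_sub_one_of_pos (by positivity)
    have hlog : Real.log (1 / t) = -Real.log t := by
      rw [one_div, Real.log_inv]
    have key : t * (-Real.log t) ≤ 1 - t := by
      rw [← hlog]
      have := mul_le_mul_of_nonneg_left hinv ht.le
      calc t * Real.log (1 / t) ≤ t * (1 / t - 1) := this
        _ = 1 - t := by field_simp
    have := abs_nonneg (Real.log c)
    nlinarith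
  · have hc1 : 1 < c := h1.trans_le htc
    have habs : |Real.log t| = Real.log t := abs_of_pos (Real.log_pos h1)
    have habsc : |Real.log c| = Real.log c := abs_of_pos (Real.log_pos hc1)
    have hlog : Real.log t ≤ Real.log c := Real.log_le_log ht htc
    have : t * (1 + Real.log t) ≤ c * (1 + Real.log c) := by
      apply mul_le_mul htc (by linarith) (by nlinarith [Real.log_pos h1]) hc.le
    rw [habs, habsc]; linarith

/-- Finiteness of `∫_0^∞ q(u)(1+|log q(u)|) η(u, q(u)) du` for a density `η`
bounded by `K (x²+y²)^{-3/2}` and a non-increasing `q : (0,∞) → (0,∞)`. -/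
theorem boundary_log_integral_finite
    (K : ℝ) (hK : 0 < K) (η : ℝ × ℝ → ℝ) (hηmeas : Measurable η)
    (hηpos : ∀ x y : ℝ, 0 < x → 0 < y → 0 ≤ η (x, y))
    (hηbd : ∀ x y : ℝ, 0 < x → 0 < y → η (x, y) ≤ K * (x ^ 2 + y ^ 2) ^ (-(3 : ℝ) / 2))
    (q : ℝ → ℝ) (hq : AntitoneOn q (Set.Ioi 0)) (hqpos : ∀ x : ℝ, 0 < x → 0 < q x) :
    (∫⁻ u in Set.Ioi (0 : ℝ),
      ENNReal.ofReal (q u * (1 + |Real.log (q u)|) * η (u, q u))) < ⊤ := by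
  set c := q 1 with hc_def
  have hc : 0 < c := hqpos 1 one_pos
  set B := K * ((1 + |Real.log c|) / c ^ 2 + 1 / c) with hB_def
  set M := K * (c * (1 + |Real.log c|) + 1) with hM_def
  have hM0 : 0 ≤ M := by
    have := abs_nonneg (Real.log c)
    apply mul_nonneg hK.le; nlinarith
  -- split the domain
  have hsplit : Set.Ioi (0 : ℝ) = Set.Ioc 0 1 ∪ Set.Ioi 1 :=
    (Set.Ioc_union_Ioi_eq_Ioi zero_le_one).symm
  rw [hsplit, lintegral_union measurableSet_Ioi Set.Ioc_disjoint_Ioi_same]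
  have part1 : (∫⁻ u in Set.Ioc (0 : ℝ) 1,
      ENNReal.ofReal (q u * (1 + |Real.log (q u)|) * η (u, q u))) < ⊤ := by
    have hb : ∀ u ∈ Set.Ioc (0 : ℝ) 1,
        ENNReal.ofReal (q u * (1 + |Real.log (q u)|) * η (u, q u)) ≤ ENNReal.ofReal B := by
      intro u ⟨hu0, hu1⟩
      apply ENNReal.ofReal_le_ofReal
      set t := q u with ht_def
      have ht : 0 < t := hqpos u hu0
      have hct : c ≤ t := hq (Set.mem_Ioi.mpr hu0) (Set.mem_Ioi.mpr one_pos) hu1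
      have hη1 : η (u, t) ≤ K * (u ^ 2 + t ^ 2) ^ (-(3 : ℝ) / 2) := hηbd u t hu0 ht
      have hη2 : η (u, t) ≤ K * (1 / t ^ 3) := by
        refine hη1.trans ?_
        exact mul_le_mul_of_nonneg_left (base_bound u t ht) hK.le
      have hfac : 0 ≤ t * (1 + |Real.log t|) := by positivity
      have step : t * (1 + |Real.log t|) * η (u, t) ≤
          t * (1 + |Real.log t|) * (K * (1 / t ^ 3)) :=
        mul_le_mul_of_nonneg_left hη2 hfac
      have heq : t * (1 + |Real.log t|) * (K * (1 / t ^ 3)) =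
          K * ((1 + |Real.log t|) / t ^ 2) := by
        field_simp
      have hfin : K * ((1 + |Real.log t|) / t ^ 2) ≤ B := by
        rw [hB_def]
        exact mul_le_mul_of_nonneg_left (aux1 c t hc hct) hK.le
      calc t * (1 + |Real.log t|) * η (u, t) ≤ K * ((1 + |Real.log t|) / t ^ 2) := by
            rw [← heq]; exact step
        _ ≤ B := hfin
    calc (∫⁻ u in Set.Ioc (0 : ℝ) 1,
        ENNReal.ofReal (q u * (1 + |Real.log (q u)|) * η (u, q u)))
        ≤ ∫⁻ _ in Set.Ioc (0 : ℝ) 1, ENNReal.ofReal B :=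
          setLIntegral_mono' measurableSet_Ioc hb
      _ = ENNReal.ofReal B * volume (Set.Ioc (0 : ℝ) 1) := by
          rw [setLIntegral_const]
      _ < ⊤ := by
          apply ENNReal.mul_lt_top ENNReal.ofReal_lt_top
          simp [Real.volume_Ioc]
  have part2 : (∫⁻ u in Set.Ioi (1 : ℝ),
      ENNReal.ofReal (q u * (1 + |Real.log (q u)|) * η (u, q u))) < ⊤ := by
    have hint : IntegrableOn (fun u : ℝ => M * u ^ (-(3 : ℝ))) (Set.Ioi 1) := by
      exact (integrableOn_Ioi_rpow_of_lt (by norm_num) one_pos).const_mul M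
    have hb : ∀ u ∈ Set.Ioi (1 : ℝ),
        ENNReal.ofReal (q u * (1 + |Real.log (q u)|) * η (u, q u)) ≤
        ENNReal.ofReal (M * u ^ (-(3 : ℝ))) := by
      intro u hu1
      have hu1' : (1 : ℝ) < u := hu1
      have hu0 : (0 : ℝ) < u := one_pos.trans hu1'
      apply ENNReal.ofReal_le_ofReal
      set t := q u with ht_def
      have ht : 0 < t := hqpos u hu0
      have htc : t ≤ c := hq (Set.mem_Ioi.mpr one_pos) (Set.mem_Ioi.mpr hu0) hu1'.le
      have hη1 : η (u, t) ≤ K * (u ^ 2 + t ^ 2) ^ (-(3 : ℝ) / 2) := hηbd u t hu0 ht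
      have hbase : (u ^ 2 + t ^ 2 : ℝ) ^ (-(3 : ℝ) / 2) ≤ 1 / u ^ 3 := by
        rw [add_comm]; exact base_bound t u hu0
      have hη2 : η (u, t) ≤ K * (1 / u ^ 3) :=
        hη1.trans (mul_le_mul_of_nonneg_left hbase hK.le)
      have hfac : 0 ≤ t * (1 + |Real.log t|) := by positivity
      have step : t * (1 + |Real.log t|) * η (u, t) ≤
          t * (1 + |Real.log t|) * (K * (1 / u ^ 3)) :=
        mul_le_mul_of_nonneg_left hη2 hfac
      have step2 : t * (1 + |Real.log t|) * (K * (1 / u ^ 3)) ≤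
          (c * (1 + |Real.log c|) + 1) * (K * (1 / u ^ 3)) := by
        apply mul_le_mul_of_nonneg_right (aux2 c t hc ht htc) (by positivity)
      have heq : (c * (1 + |Real.log c|) + 1) * (K * (1 / u ^ 3)) = M * u ^ (-(3 : ℝ)) := by
        rw [hM_def, Real.rpow_neg hu0.le, show (3 : ℝ) = ((3 : ℕ) : ℝ) by norm_num,
          Real.rpow_natCast]
        field_simp
      linarith [step, step2, heq.le, heq.ge]
    calc (∫⁻ u in Set.Ioi (1 : ℝ),
        ENNReal.ofReal (q u * (1 + |Real.log (q u)|) * η (u, q u)))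
        ≤ ∫⁻ u in Set.Ioi (1 : ℝ), ENNReal.ofReal (M * u ^ (-(3 : ℝ))) :=
          setLIntegral_mono' measurableSet_Ioi hb
      _ < ⊤ := hint.setLIntegral_lt_top
  exact ENNReal.add_lt_top.mpr ⟨part1, part2⟩
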